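/- Let n ≥ 1 be an integer and let j be an integer with 0 ≤ j ≤ n. The n-dimensional Lebesgue measure of the set {u ∈ [0,1]^n : j - 1/2 ≤ u_1 + ⋯ + u_n ≤ j + 1/2} equals Ā(n,j)/(2^n · n!), where Ā(n,j) = Σ_{r=0}^{j} (-1)^r · C(n+1, r) · (2j-2r+1)^n. Equivalently, if U_1,…,U_n are independent uniform random variables on [0,1], then P(j - 1/2 ≤ U_1 + ⋯ + U_n ≤ j + 1/2) = Ā(n,j)/(2^n · n!). -/

import Mathlib

/-- The signed Eulerian number `Ā(n,j) = Σ_{r=0}^{j} (-1)^r C(n+1,r) (2j-2r+1)^n`. -/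
def signedEulerian (n j : ℕ) : ℤ :=
  ∑ r ∈ Finset.range (j + 1),
    (-1 : ℤ) ^ r * (Nat.choose (n + 1) r : ℤ) * (2 * (j : ℤ) - 2 * r + 1) ^ n

open MeasureTheory Set Finset

noncomputable def ff (n : ℕ) (t : ℝ) : ℝ :=
  (∑ r ∈ Finset.range (n + 1), (-1 : ℝ) ^ r * (n.choose r : ℝ) * max (t - r) 0 ^ n)
    / n.factorial

def SS (n : ℕ) (t : ℝ) : Set (Fin n → ℝ) :=
  {u | (∀ k, u k ∈ Set.Icc (0 : ℝ) 1) ∧ ∑ k, u k ≤ t}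

lemma hasDerivAt_maxpow (n : ℕ) (hn : 1 ≤ n) (y : ℝ) :
    HasDerivAt (fun y : ℝ => max y 0 ^ (n + 1)) ((n + 1) * max y 0 ^ n) y := by
  rcases lt_trichotomy y 0 with h | h | h
  · have : HasDerivAt (fun _ : ℝ => (0 : ℝ)) 0 y := hasDerivAt_const _ _
    have heq : (fun y : ℝ => max y 0 ^ (n + 1)) =ᶠ[nhds y] fun _ => (0 : ℝ) := by
      filter_upwards [eventually_lt_nhds h] with x hx
      rw [max_eq_right hx.le, zero_pow (by omega)]
    have := this.congr_of_eventuallyEq heq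
    refine this.congr_deriv ?_
    rw [max_eq_right h.le, zero_pow (by omega), mul_zero]
  · subst h
    rw [hasDerivAt_iff_tendsto]
    simp only [max_self, zero_pow (by omega : n ≠ 0), mul_zero, sub_zero, smul_zero,
      zero_pow (by omega : n + 1 ≠ 0)]
    have key : ∀ x : ℝ, ‖x‖⁻¹ * ‖max x 0 ^ (n + 1)‖ ≤ ‖x‖ ^ n := by
      intro x
      rcases eq_or_ne x 0 with rfl | hx
      · simp [zero_pow (by omega : n ≠ 0)]
      · have h1 : ‖max x 0 ^ (n + 1)‖ ≤ ‖x‖ ^ (n + 1) := by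
          rw [norm_pow]
          refine pow_le_pow_left₀ (norm_nonneg _) ?_ _
          rw [Real.norm_eq_abs, Real.norm_eq_abs]
          rw [abs_of_nonneg (le_max_right x 0)]
          exact max_le (le_abs_self x) (abs_nonneg x)
        calc ‖x‖⁻¹ * ‖max x 0 ^ (n + 1)‖ ≤ ‖x‖⁻¹ * ‖x‖ ^ (n + 1) := by
              exact mul_le_mul_of_nonneg_left h1 (by positivity)
          _ = ‖x‖ ^ n := by
              rw [pow_succ', ← mul_assoc, inv_mul_cancel₀ (norm_ne_zero_iff.2 hx), one_mul]
    refine squeeze_zero (fun x => by positivity) key ?_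
    have : Filter.Tendsto (fun x : ℝ => ‖x‖ ^ n) (nhds 0) (nhds (‖(0:ℝ)‖ ^ n)) := by
      exact ((continuous_norm).pow n).tendsto 0
    simpa [zero_pow (by omega : n ≠ 0)] using this
  · have heq : (fun y : ℝ => max y 0 ^ (n + 1)) =ᶠ[nhds y] fun x => x ^ (n + 1) := by
      filter_upwards [eventually_gt_nhds h] with x hx
      rw [max_eq_left hx.le]
    have := (hasDerivAt_pow (n + 1) y).congr_of_eventuallyEq heq
    refine this.congr_deriv ?_
    rw [max_eq_left h.le]; push_cast; ring

lemma integral_maxpow (n : ℕ) (hn : 1 ≤ n) (a : ℝ) :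
    ∫ x in (0:ℝ)..1, max (a - x) 0 ^ n
      = (max a 0 ^ (n + 1) - max (a - 1) 0 ^ (n + 1)) / (n + 1) := by
  have hder : ∀ x ∈ uIcc (0:ℝ) 1,
      HasDerivAt (fun x : ℝ => -(max (a - x) 0 ^ (n + 1)) / (n + 1)) (max (a - x) 0 ^ n) x := by
    intro x _
    have h1 : HasDerivAt (fun x : ℝ => a - x) (-1) x := by
      simpa using (hasDerivAt_id x).const_sub a
    have h2 := (hasDerivAt_maxpow n hn (a - x)).comp x h1
    have h3 := h2.neg.div_const ((n : ℝ) + 1)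
    refine h3.congr_deriv ?_
    field_simp
  have hcont : ContinuousOn (fun x : ℝ => max (a - x) 0 ^ n) (uIcc 0 1) :=
    (((continuous_const.sub continuous_id).max continuous_const).pow n).continuousOn
  rw [intervalIntegral.integral_eq_sub_of_hasDerivAt hder
    hcont.intervalIntegrable]
  push_cast
  ring

lemma cont_ff (n : ℕ) : Continuous (ff n) := by
  unfold ff
  refine Continuous.div_const ?_ _
  refine continuous_finset_sum _ fun r _ => ?_
  exact continuous_const.mul (((continuous_id.sub continuous_const).max continuous_const).pow n)

lemma ff_nonneg_of_one (t : ℝ) : 0 ≤ ff 1 t := by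
  have : ff 1 t = max t 0 - max (t - 1) 0 := by
    simp [ff, Finset.sum_range_succ]; ring
  rw [this, sub_nonneg]
  exact max_le_max (by linarith) le_rfl

lemma pascal_telescope (n : ℕ) (A : ℕ → ℝ) :
    ∑ r ∈ Finset.range (n + 1), (-1 : ℝ) ^ r * (n.choose r : ℝ) * (A r - A (r + 1))
      = ∑ r ∈ Finset.range (n + 2), (-1 : ℝ) ^ r * ((n + 1).choose r : ℝ) * A r := by
  have key : ∑ r ∈ Finset.range (n + 1), (-1 : ℝ) ^ (r + 1) * (n.choose (r + 1) : ℝ) * A (r + 1)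
      = (∑ r ∈ Finset.range (n + 1), (-1 : ℝ) ^ r * (n.choose r : ℝ) * A r) - A 0 := by
    have h2 : ∑ r ∈ Finset.range (n + 2), (-1 : ℝ) ^ r * (n.choose r : ℝ) * A r
        = (∑ r ∈ Finset.range (n + 1), (-1 : ℝ) ^ (r + 1) * (n.choose (r + 1) : ℝ) * A (r + 1))
          + A 0 := by
      rw [Finset.sum_range_succ' (fun r => (-1 : ℝ) ^ r * (n.choose r : ℝ) * A r)]
      simp
    have h3 : ∑ r ∈ Finset.range (n + 2), (-1 : ℝ) ^ r * (n.choose r : ℝ) * A r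
        = ∑ r ∈ Finset.range (n + 1), (-1 : ℝ) ^ r * (n.choose r : ℝ) * A r := by
      rw [Finset.sum_range_succ]
      simp [Nat.choose_succ_self]
    linarith
  rw [Finset.sum_range_succ' (fun r => (-1 : ℝ) ^ r * (((n + 1).choose r : ℕ) : ℝ) * A r)]
  simp only [Nat.choose_succ_succ n]
  push_cast
  have split : ∑ i ∈ Finset.range (n + 1),
      (-1 : ℝ) ^ (i + 1) * ((n.choose i : ℝ) + (n.choose (i + 1) : ℝ)) * A (i + 1)
      = (∑ i ∈ Finset.range (n + 1), (-1 : ℝ) ^ (i + 1) * (n.choose i : ℝ) * A (i + 1))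
        + ∑ i ∈ Finset.range (n + 1), (-1 : ℝ) ^ (i + 1) * (n.choose (i + 1) : ℝ) * A (i + 1) := by
    rw [← Finset.sum_add_distrib]
    exact Finset.sum_congr rfl fun i _ => by ring
  rw [split, key]
  have hsub : ∑ r ∈ Finset.range (n + 1), (-1 : ℝ) ^ r * (n.choose r : ℝ) * (A r - A (r + 1))
      = (∑ r ∈ Finset.range (n + 1), (-1 : ℝ) ^ r * (n.choose r : ℝ) * A r)
        - ∑ r ∈ Finset.range (n + 1), (-1 : ℝ) ^ r * (n.choose r : ℝ) * A (r + 1) := by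
    rw [← Finset.sum_sub_distrib]
    exact Finset.sum_congr rfl fun i _ => by ring
  have hneg : ∑ i ∈ Finset.range (n + 1), (-1 : ℝ) ^ (i + 1) * (n.choose i : ℝ) * A (i + 1)
      = -∑ i ∈ Finset.range (n + 1), (-1 : ℝ) ^ i * (n.choose i : ℝ) * A (i + 1) := by
    rw [← Finset.sum_neg_distrib]
    exact Finset.sum_congr rfl fun i _ => by ring
  rw [hsub, hneg]
  simp only [Nat.choose_zero_right, Nat.cast_one, pow_zero]
  ring

lemma ff_rec (n : ℕ) (hn : 1 ≤ n) (t : ℝ) :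
    ∫ x in (0:ℝ)..1, ff n (t - x) = ff (n + 1) t := by
  have h1 : ∀ x : ℝ, ff n (t - x)
      = ∑ r ∈ Finset.range (n + 1),
          ((-1 : ℝ) ^ r * (n.choose r : ℝ) / n.factorial) * max (t - r - x) 0 ^ n := by
    intro x
    rw [ff, Finset.sum_div]
    refine Finset.sum_congr rfl fun r _ => ?_
    rw [show t - x - (r : ℝ) = t - r - x by ring]
    ring
  simp only [h1]
  rw [intervalIntegral.integral_finset_sum]
  swap
  · intro r _
    exact (Continuous.intervalIntegrable (by
      exact continuous_const.mul
        (((continuous_const.sub continuous_id).max continuous_const).pow n)) 0 1)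
  have h2 : ∀ r ∈ Finset.range (n + 1),
      ∫ x in (0:ℝ)..1, ((-1 : ℝ) ^ r * (n.choose r : ℝ) / n.factorial) * max (t - r - x) 0 ^ n
      = ((-1 : ℝ) ^ r * (n.choose r : ℝ) / n.factorial)
          * ((max (t - r) 0 ^ (n + 1) - max (t - r - 1) 0 ^ (n + 1)) / (n + 1)) := by
    intro r _
    rw [intervalIntegral.integral_const_mul, integral_maxpow n hn]
  rw [Finset.sum_congr rfl h2]
  -- now pure algebra
  set A : ℕ → ℝ := fun r => max (t - r) 0 ^ (n + 1) with hA
  have hA' : ∀ r : ℕ, max (t - r - 1) 0 ^ (n + 1) = A (r + 1) := by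
    intro r; rw [hA]; push_cast; ring_nf
  have h3 : ∑ r ∈ Finset.range (n + 1),
      ((-1 : ℝ) ^ r * (n.choose r : ℝ) / n.factorial)
        * ((max (t - r) 0 ^ (n + 1) - max (t - r - 1) 0 ^ (n + 1)) / (n + 1))
      = (∑ r ∈ Finset.range (n + 1), (-1 : ℝ) ^ r * (n.choose r : ℝ) * (A r - A (r + 1)))
          / ((n + 1) * n.factorial) := by
    rw [Finset.sum_div]
    refine Finset.sum_congr rfl fun r _ => ?_
    rw [← hA' r]
    have : A r = max (t - r) 0 ^ (n + 1) := rfl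
    rw [this]
    have hf : (n.factorial : ℝ) ≠ 0 := Nat.cast_ne_zero.2 n.factorial_ne_zero
    have hn1 : ((n : ℝ) + 1) ≠ 0 := by positivity
    field_simp
  rw [h3, pascal_telescope]
  have hfac : (((n + 1).factorial : ℕ) : ℝ) = ((n : ℝ) + 1) * n.factorial := by
    rw [Nat.factorial_succ]; push_cast; ring
  rw [ff, hfac, hA]

lemma isClosed_SS (n : ℕ) (t : ℝ) : IsClosed (SS n t) := by
  have h1 : IsClosed {u : Fin n → ℝ | ∀ k, u k ∈ Set.Icc (0 : ℝ) 1} := by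
    have : {u : Fin n → ℝ | ∀ k, u k ∈ Set.Icc (0 : ℝ) 1}
        = ⋂ k, (fun u : Fin n → ℝ => u k) ⁻¹' Set.Icc (0 : ℝ) 1 := by
      ext u; simp
    rw [this]
    exact isClosed_iInter fun k => isClosed_Icc.preimage (continuous_apply k)
  have h2 : IsClosed {u : Fin n → ℝ | ∑ k, u k ≤ t} :=
    isClosed_le (continuous_finset_sum _ fun k _ => continuous_apply k) continuous_const
  exact h1.inter h2

lemma measurableSet_SS (n : ℕ) (t : ℝ) : MeasurableSet (SS n t) :=
  (isClosed_SS n t).measurableSet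

lemma vol_SS_succ (n : ℕ) (t : ℝ) :
    volume (SS (n + 1) t) = ∫⁻ x in Set.Icc (0 : ℝ) 1, volume (SS n (t - x)) := by
  have hmp := (volume_preserving_piFinSuccAbove (fun _ : Fin (n + 1) => ℝ) 0).symm
  set e := MeasurableEquiv.piFinSuccAbove (fun _ : Fin (n + 1) => ℝ) 0 with he
  have hS := measurableSet_SS (n + 1) t
  have himg : volume (SS (n + 1) t) = volume (e.symm ⁻¹' SS (n + 1) t) :=
    (hmp.measure_preimage hS.nullMeasurableSet).symm
  rw [himg]
  have hT : e.symm ⁻¹' SS (n + 1) t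
      = {p : ℝ × (Fin n → ℝ) |
          (p.1 ∈ Set.Icc (0 : ℝ) 1 ∧ ∀ k, p.2 k ∈ Set.Icc (0 : ℝ) 1)
            ∧ p.1 + ∑ k, p.2 k ≤ t} := by
    ext ⟨x, y⟩
    have hval : e.symm (x, y) = Fin.cons x y := by
      simp [he, MeasurableEquiv.piFinSuccAbove, Fin.insertNthEquiv, Fin.insertNth_zero]
    simp only [Set.mem_preimage, SS, Set.mem_setOf_eq, hval]
    rw [Fin.forall_fin_succ, Fin.sum_univ_succ]
    simp
  rw [hT, Measure.volume_eq_prod, Measure.prod_apply]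
  swap
  · have : {p : ℝ × (Fin n → ℝ) |
          (p.1 ∈ Set.Icc (0 : ℝ) 1 ∧ ∀ k, p.2 k ∈ Set.Icc (0 : ℝ) 1)
            ∧ p.1 + ∑ k, p.2 k ≤ t} = e.symm ⁻¹' SS (n + 1) t := hT.symm
    rw [this]
    exact e.symm.measurable hS
  have hsec : ∀ x : ℝ,
      volume (Prod.mk x ⁻¹' {p : ℝ × (Fin n → ℝ) |
          (p.1 ∈ Set.Icc (0 : ℝ) 1 ∧ ∀ k, p.2 k ∈ Set.Icc (0 : ℝ) 1)
            ∧ p.1 + ∑ k, p.2 k ≤ t})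
      = Set.indicator (Set.Icc (0 : ℝ) 1) (fun x => volume (SS n (t - x))) x := by
    intro x
    by_cases hx : x ∈ Set.Icc (0 : ℝ) 1
    · rw [Set.indicator_of_mem hx]
      congr 1
      ext y
      simp only [Set.mem_preimage, Set.mem_setOf_eq, SS]
      constructor
      · rintro ⟨⟨-, h1⟩, h2⟩; exact ⟨h1, by linarith⟩
      · rintro ⟨h1, h2⟩; exact ⟨⟨hx, h1⟩, by linarith⟩
    · rw [Set.indicator_of_notMem hx]
      have hemp : (Prod.mk x ⁻¹' {p : ℝ × (Fin n → ℝ) |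
          (p.1 ∈ Set.Icc (0 : ℝ) 1 ∧ ∀ k, p.2 k ∈ Set.Icc (0 : ℝ) 1)
            ∧ p.1 + ∑ k, p.2 k ≤ t}) = (∅ : Set (Fin n → ℝ)) := by
        ext y
        simp only [Set.mem_preimage, Set.mem_setOf_eq, Set.mem_empty_iff_false, iff_false]
        rintro ⟨⟨h1, -⟩, -⟩
        exact hx h1
      rw [hemp, measure_empty]
  simp only [hsec]
  rw [lintegral_indicator measurableSet_Icc]

lemma vol_SS (n : ℕ) (hn : 1 ≤ n) :
    (∀ t, 0 ≤ ff n t) ∧ ∀ t : ℝ, volume (SS n t) = ENNReal.ofReal (ff n t) := by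
  induction n, hn using Nat.le_induction with
  | base =>
    have hval : ∀ t : ℝ, ff 1 t = max t 0 - max (t - 1) 0 := by
      intro t; simp [ff, Finset.sum_range_succ]; ring
    constructor
    · intro t
      rw [hval, sub_nonneg]
      exact max_le_max (by linarith) le_rfl
    · intro t
      have hmp := (volume_preserving_funUnique (Fin 1) ℝ)
      have hpre : SS 1 t = (MeasurableEquiv.funUnique (Fin 1) ℝ) ⁻¹'
          (Set.Icc (0:ℝ) 1 ∩ Set.Iic t) := by
        ext u
        simp only [SS, Set.mem_preimage, Set.mem_inter_iff, Set.mem_Iic, Set.mem_setOf_eq,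
          MeasurableEquiv.funUnique_apply]
        rw [Fin.forall_fin_one, Fin.sum_univ_one]
        rfl
      erw [hpre, hmp.measure_preimage
        ((measurableSet_Icc.inter measurableSet_Iic).nullMeasurableSet)]
      have hint : Set.Icc (0:ℝ) 1 ∩ Set.Iic t = Set.Icc (0:ℝ) (min 1 t) := by
        rw [← Set.Ici_inter_Iic, ← Set.Ici_inter_Iic, Set.inter_assoc, Set.Iic_inter_Iic]
      rw [hint, Real.volume_Icc, hval]
      rcases le_total t 0 with h | h
      · have h1 : (1:ℝ) ⊓ t - 0 = t := by rw [min_eq_right (by linarith)]; ring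
        rw [max_eq_right h, max_eq_right (by linarith : t - 1 ≤ 0), h1]
        rw [ENNReal.ofReal_eq_zero.2 h, ENNReal.ofReal_eq_zero.2 (by norm_num)]
      · rcases le_total t 1 with h1 | h1
        · rw [max_eq_left h, max_eq_right (by linarith : t - 1 ≤ 0)]
          rw [min_eq_right h1]
        · rw [max_eq_left h, max_eq_left (by linarith : 0 ≤ t - 1)]
          rw [min_eq_left h1]
          norm_num
  | succ n hn ih =>
    have hnn : ∀ t : ℝ, 0 ≤ ff (n + 1) t := by
      intro t
      rw [← ff_rec n hn]
      exact intervalIntegral.integral_nonneg zero_le_one fun x _ => ih.1 _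
    refine ⟨hnn, fun t => ?_⟩
    rw [vol_SS_succ]
    have h1 : ∀ x : ℝ, volume (SS n (t - x)) = ENNReal.ofReal (ff n (t - x)) :=
      fun x => ih.2 _
    simp only [h1]
    have hfi : IntegrableOn (fun x : ℝ => ff n (t - x)) (Set.Icc 0 1) := by
      exact (((cont_ff n).comp (continuous_const.sub continuous_id)).continuousOn).integrableOn_compact isCompact_Icc
    have hnn' : 0 ≤ᵐ[volume.restrict (Set.Icc (0:ℝ) 1)] fun x => ff n (t - x) :=
      Filter.Eventually.of_forall fun x => ih.1 _
    rw [← ofReal_integral_eq_lintegral_ofReal hfi hnn']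
    rw [MeasureTheory.integral_Icc_eq_integral_Ioc,
      ← intervalIntegral.integral_of_le zero_le_one, ff_rec n hn]

lemma vol_open (n : ℕ) (hn : 1 ≤ n) (c : ℝ) :
    volume {u : Fin n → ℝ | (∀ k, u k ∈ Set.Icc (0 : ℝ) 1) ∧ ∑ k, u k < c}
      = ENNReal.ofReal (ff n c) := by
  have hO_eq : {u : Fin n → ℝ | (∀ k, u k ∈ Set.Icc (0 : ℝ) 1) ∧ ∑ k, u k < c}
      = ⋃ k : ℕ, SS n (c - 1 / (k + 1)) := by
    ext u
    simp only [Set.mem_setOf_eq, Set.mem_iUnion, SS]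
    constructor
    · rintro ⟨h1, h2⟩
      obtain ⟨k, hk⟩ := exists_nat_one_div_lt (sub_pos.2 h2)
      exact ⟨k, h1, by linarith⟩
    · rintro ⟨k, h1, h2⟩
      have hpos : (0 : ℝ) < 1 / ((k : ℝ) + 1) := by positivity
      exact ⟨h1, by linarith⟩
  have hmono : Monotone fun k : ℕ => SS n (c - 1 / ((k : ℝ) + 1)) := by
    intro k l hkl
    have h1 : 1 / ((l : ℝ) + 1) ≤ 1 / ((k : ℝ) + 1) := by
      apply one_div_le_one_div_of_le (by positivity)
      exact_mod_cast add_le_add_left (Nat.cast_le.2 hkl) 1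
    rintro u ⟨hu1, hu2⟩
    exact ⟨hu1, by linarith⟩
  have hvolmono : Monotone fun k : ℕ => volume (SS n (c - 1 / ((k : ℝ) + 1))) :=
    fun k l hkl => measure_mono (hmono hkl)
  have hts : Filter.Tendsto (fun k : ℕ => volume (SS n (c - 1 / ((k : ℝ) + 1))))
      Filter.atTop (nhds (ENNReal.ofReal (ff n c))) := by
    have h1 : Filter.Tendsto (fun k : ℕ => c - 1 / ((k : ℝ) + 1))
        Filter.atTop (nhds c) := by
      have h0 := tendsto_one_div_add_atTop_nhds_zero_nat (𝕜 := ℝ)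
      have := Filter.Tendsto.sub (tendsto_const_nhds (x := c)) h0
      simpa using this
    have h2 := (ENNReal.continuous_ofReal.tendsto _).comp
      (((cont_ff n).tendsto c).comp h1)
    refine h2.congr fun k => ?_
    exact ((vol_SS n hn).2 _).symm
  rw [hO_eq, hmono.directed_le.measure_iUnion]
  exact tendsto_nhds_unique (tendsto_atTop_iSup hvolmono) hts

lemma vol_slab (n : ℕ) (hn : 1 ≤ n) (a b : ℝ) (hab : a ≤ b) :
    volume {u : Fin n → ℝ | (∀ k, u k ∈ Set.Icc (0 : ℝ) 1) ∧ a ≤ ∑ k, u k ∧ ∑ k, u k ≤ b}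
      = ENNReal.ofReal (ff n b - ff n a) := by
  set O := {u : Fin n → ℝ | (∀ k, u k ∈ Set.Icc (0 : ℝ) 1) ∧ ∑ k, u k < a} with hO
  have hdiff : {u : Fin n → ℝ | (∀ k, u k ∈ Set.Icc (0 : ℝ) 1) ∧ a ≤ ∑ k, u k ∧ ∑ k, u k ≤ b}
      = SS n b \ O := by
    ext u
    simp only [Set.mem_setOf_eq, Set.mem_diff, SS, hO]
    constructor
    · rintro ⟨h1, h2, h3⟩
      exact ⟨⟨h1, h3⟩, fun h => absurd h.2 (not_lt.2 h2)⟩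
    · rintro ⟨⟨h1, h3⟩, h4⟩
      refine ⟨h1, le_of_not_gt fun hlt => h4 ⟨h1, hlt⟩, h3⟩
  have hOmeas : MeasurableSet O := by
    have : O = {u : Fin n → ℝ | ∀ k, u k ∈ Set.Icc (0 : ℝ) 1}
        ∩ {u : Fin n → ℝ | ∑ k, u k < a} := by
      ext u; simp [hO]
    rw [this]
    refine MeasurableSet.inter ?_ ?_
    · have : IsClosed {u : Fin n → ℝ | ∀ k, u k ∈ Set.Icc (0 : ℝ) 1} := by
        have h := isClosed_SS n (a + b + 1)
        have : {u : Fin n → ℝ | ∀ k, u k ∈ Set.Icc (0 : ℝ) 1}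
            = ⋂ k, (fun u : Fin n → ℝ => u k) ⁻¹' Set.Icc (0 : ℝ) 1 := by ext u; simp
        rw [this]
        exact isClosed_iInter fun k => isClosed_Icc.preimage (continuous_apply k)
      exact this.measurableSet
    · exact (isOpen_lt (continuous_finset_sum _ fun k _ => continuous_apply k)
        continuous_const).measurableSet
  have hsub : O ⊆ SS n b := by
    rintro u ⟨h1, h2⟩
    exact ⟨h1, by linarith⟩
  have hOvol : volume O = ENNReal.ofReal (ff n a) := vol_open n hn a
  rw [hdiff, measure_diff hsub hOmeas.nullMeasurableSet
    (by rw [hOvol]; exact ENNReal.ofReal_ne_top)]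
  rw [(vol_SS n hn).2, hOvol, ENNReal.ofReal_sub _ ((vol_SS n hn).1 a)]

lemma ff_diff (n j : ℕ) (hn : 1 ≤ n) (hj : j ≤ n) :
    ff n ((j : ℝ) + 1 / 2) - ff n ((j : ℝ) - 1 / 2)
      = (signedEulerian n j : ℝ) / (2 ^ n * n.factorial) := by
  set B : ℕ → ℝ := fun r => ((j : ℝ) + 1 / 2 - r) ^ n with hB
  have hb : ∑ r ∈ Finset.range (n + 1),
        (-1 : ℝ) ^ r * (n.choose r : ℝ) * max ((j : ℝ) + 1 / 2 - r) 0 ^ n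
      = ∑ r ∈ Finset.range (j + 1), (-1 : ℝ) ^ r * (n.choose r : ℝ) * B r := by
    rw [← Finset.sum_subset (Finset.range_subset_range.2 (by omega) :
        Finset.range (j + 1) ⊆ Finset.range (n + 1))]
    · refine Finset.sum_congr rfl fun r hr => ?_
      rw [Finset.mem_range] at hr
      have hrj : (r : ℝ) ≤ j := Nat.cast_le.2 (by omega)
      rw [hB, max_eq_left (by linarith)]
    · intro r hr hnr
      rw [Finset.mem_range, not_lt] at hnr
      have hrj : (j : ℝ) + 1 ≤ r := by exact_mod_cast hnr
      rw [max_eq_right (by linarith), zero_pow (by omega), mul_zero]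
  have hc : ∑ r ∈ Finset.range (n + 1),
        (-1 : ℝ) ^ r * (n.choose r : ℝ) * max ((j : ℝ) - 1 / 2 - r) 0 ^ n
      = ∑ r ∈ Finset.range j, (-1 : ℝ) ^ r * (n.choose r : ℝ) * B (r + 1) := by
    rw [← Finset.sum_subset (Finset.range_subset_range.2 (by omega) :
        Finset.range j ⊆ Finset.range (n + 1))]
    · refine Finset.sum_congr rfl fun r hr => ?_
      rw [Finset.mem_range] at hr
      have hrj : (r : ℝ) + 1 ≤ j := by exact_mod_cast hr
      rw [hB, max_eq_left (by linarith)]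
      push_cast
      ring_nf
    · intro r hr hnr
      rw [Finset.mem_range, not_lt] at hnr
      have hrj : (j : ℝ) ≤ r := Nat.cast_le.2 hnr
      rw [max_eq_right (by linarith), zero_pow (by omega), mul_zero]
  have h2n : ((2 : ℝ)) ^ n ≠ 0 := by positivity
  have hfac : ((n.factorial : ℕ) : ℝ) ≠ 0 := Nat.cast_ne_zero.2 n.factorial_ne_zero
  have hE : (signedEulerian n j : ℝ) / (2 ^ n * n.factorial)
      = (∑ r ∈ Finset.range (j + 1), (-1 : ℝ) ^ r * ((n + 1).choose r : ℝ) * B r)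
          / n.factorial := by
    rw [signedEulerian]
    push_cast
    rw [Finset.sum_div, Finset.sum_div]
    refine Finset.sum_congr rfl fun r hr => ?_
    have hpow : (2 * (j : ℝ) - 2 * r + 1) ^ n = 2 ^ n * B r := by
      rw [hB, ← mul_pow]
      congr 1
      ring
    rw [hpow]
    field_simp
  rw [ff, ff, hb, hc, hE, div_sub_div_same]
  congr 1
  rw [Finset.sum_range_succ' (fun r => (-1 : ℝ) ^ r * (((n + 1).choose r : ℕ) : ℝ) * B r) j,
      Finset.sum_range_succ' (fun r => (-1 : ℝ) ^ r * ((n.choose r : ℕ) : ℝ) * B r) j]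
  simp only [Nat.choose_succ_succ n, Nat.choose_zero_right, Nat.cast_one, pow_zero, one_mul,
    Nat.cast_add]
  have comb : ∑ i ∈ Finset.range j,
        (-1 : ℝ) ^ (i + 1) * ((n.choose i : ℝ) + (n.choose (i + 1) : ℝ)) * B (i + 1)
      = (∑ i ∈ Finset.range j, (-1 : ℝ) ^ (i + 1) * (n.choose (i + 1) : ℝ) * B (i + 1))
        - ∑ i ∈ Finset.range j, (-1 : ℝ) ^ i * (n.choose i : ℝ) * B (i + 1) := by
    rw [← Finset.sum_sub_distrib]
    exact Finset.sum_congr rfl fun i _ => by ring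
  rw [comb]
  ring

theorem stmt7 (n : ℕ) (hn : 1 ≤ n) (j : ℕ) (hj : j ≤ n) :
    MeasureTheory.volume
        {u : Fin n → ℝ | (∀ k, u k ∈ Set.Icc (0 : ℝ) 1) ∧
          (j : ℝ) - 1 / 2 ≤ ∑ k, u k ∧ ∑ k, u k ≤ (j : ℝ) + 1 / 2}
      = ENNReal.ofReal ((signedEulerian n j : ℝ) / (2 ^ n * Nat.factorial n)) := by
  rw [vol_slab n hn _ _ (by linarith : (j : ℝ) - 1 / 2 ≤ (j : ℝ) + 1 / 2),
    ff_diff n j hn hj]
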